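/- Let g : 2^V → [0,1] satisfy g(S) ≤ Σ_{v∈S} g({v}) for all S (subadditivity over singletons), and let W ⊆ V be a random subset with P(v ∈ W) ≥ c·g({v}) for all v. For any feasible family 𝓕 ⊆ 2^V closed under taking subsets, E[ max_{S∈𝓕, S⊆W} g(S) ] ≥ max over all deterministic lower bounds of the form established in Lemma 1; in particular, taking 𝓕 = {S : |S| ≤ k} and s-fold unions W = Ṽ_s with s ≥ (k/(cε₂))log(k/ε₁) and additionally assuming g monotone submodular, the greedy algorithm applied to Ṽ_s returns a set S_greedy with E[g(S_greedy)] ≥ (1 − 1/e)·[(1 − ε₁)·OPT − ε₂]. -/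

import Mathlib

open MeasureTheory ProbabilityTheory Finset

/-- The optimal value of max_{S ⊆ W, |S| ≤ k} g(S). -/
noncomputable def bestVal {V : Type*} [DecidableEq V]
    (g : Finset V → ℝ) (k : ℕ) (W : Finset V) : ℝ :=
  (W.powerset.filter (fun S => S.card ≤ k)).sup'
    ⟨∅, by simp⟩ g

lemma le_bestVal {V : Type*} [DecidableEq V] (g : Finset V → ℝ) (k : ℕ) (W S : Finset V)
    (h1 : S ⊆ W) (h2 : S.card ≤ k) : g S ≤ bestVal g k W :=
  Finset.le_sup' g (by simp [Finset.mem_filter, Finset.mem_powerset, h1, h2])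

lemma marg_sum {V : Type*} [DecidableEq V] (g : Finset V → ℝ)
    (hsub : ∀ A B : Finset V, A ⊆ B → ∀ v ∉ B,
      g (insert v B) - g B ≤ g (insert v A) - g A)
    (T : Finset V) : ∀ A : Finset V,
    g (A ∪ T) - g T ≤ ∑ v ∈ A \ T, (g (insert v T) - g T) := by
  intro A
  induction A using Finset.induction_on with
  | empty => simp
  | insert a A' ha ih =>
    by_cases haT : a ∈ T
    · have h1 : insert a A' ∪ T = A' ∪ T := by
        rw [insert_union, insert_eq_self.2 (mem_union_right _ haT)]
      have h2 : insert a A' \ T = A' \ T := by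
        rw [insert_sdiff_of_mem _ haT]
      rw [h1, h2]; exact ih
    · have h1 : insert a A' ∪ T = insert a (A' ∪ T) := insert_union _ _ _
      have h2 : insert a A' \ T = insert a (A' \ T) := insert_sdiff_of_notMem _ haT
      have haA'T : a ∉ A' ∪ T := by simp [ha, haT]
      have key : g (insert a (A' ∪ T)) - g (A' ∪ T) ≤ g (insert a T) - g T :=
        hsub T (A' ∪ T) subset_union_right a haA'T
      have haAd : a ∉ A' \ T := fun h => ha (mem_sdiff.1 h).1
      rw [h1, h2, sum_insert haAd]
      linarith [ih]

lemma greedy_bound {V : Type*} [DecidableEq V] (g : Finset V → ℝ)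
    (hmono : ∀ A B : Finset V, A ⊆ B → g A ≤ g B)
    (hsub : ∀ A B : Finset V, A ⊆ B → ∀ v ∉ B,
      g (insert v B) - g B ≤ g (insert v A) - g A)
    (hempty : g ∅ = 0)
    (k : ℕ) (hk : 1 ≤ k) (W : Finset V) (T : ℕ → Finset V) (hT0 : T 0 = ∅)
    (hstep : ∀ ℓ < k, ∃ v ∈ W, T (ℓ + 1) = insert v (T ℓ) ∧
        ∀ w ∈ W, g (insert w (T ℓ)) ≤ g (insert v (T ℓ))) :
    (1 - 1 / Real.exp 1) * bestVal g k W ≤ g (T k) := by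
  set B := bestVal g k W with hB
  obtain ⟨SW, hSWmem, hSWval⟩ :=
    Finset.exists_mem_eq_sup' (⟨∅, by simp⟩ : (W.powerset.filter (fun S => S.card ≤ k)).Nonempty) g
  rw [Finset.mem_filter, Finset.mem_powerset] at hSWmem
  obtain ⟨hSWsub, hSWcard⟩ := hSWmem
  have hB0 : 0 ≤ B := by
    have := le_bestVal g k W ∅ (empty_subset _) (by simp)
    rw [hempty] at this; exact this
  have hkR : (0:ℝ) < k := by exact_mod_cast hk
  have h1k : (0:ℝ) ≤ 1 - 1/k := by
    rw [sub_nonneg, div_le_one hkR]; exact_mod_cast hk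
  have main : ∀ ℓ, ℓ ≤ k → B - g (T ℓ) ≤ (1 - 1/(k:ℝ))^ℓ * B := by
    intro ℓ
    induction ℓ with
    | zero => intro _; simp [hT0, hempty]
    | succ ℓ ih =>
      intro hlk
      have hl : ℓ < k := lt_of_lt_of_le (Nat.lt_succ_self ℓ) hlk
      have ihh := ih (le_of_lt hl)
      obtain ⟨v, hvW, hTsucc, hbestv⟩ := hstep ℓ hl
      have hmarg0 : 0 ≤ g (T (ℓ+1)) - g (T ℓ) := by
        rw [hTsucc]; linarith [hmono (T ℓ) (insert v (T ℓ)) (subset_insert _ _)]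
      have key : B - g (T ℓ) ≤ (k:ℝ) * (g (T (ℓ+1)) - g (T ℓ)) := by
        have hBSW : B = g SW := hSWval
        have h1 : B ≤ g (SW ∪ T ℓ) := by
          rw [hBSW]; exact hmono _ _ subset_union_left
        have h2 := marg_sum g hsub (T ℓ) SW
        have h3 : ∑ w ∈ SW \ T ℓ, (g (insert w (T ℓ)) - g (T ℓ))
            ≤ ∑ _w ∈ SW \ T ℓ, (g (T (ℓ+1)) - g (T ℓ)) := by
          apply Finset.sum_le_sum
          intro w hw
          have hwW : w ∈ W := hSWsub (mem_sdiff.1 hw).1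
          have := hbestv w hwW
          rw [hTsucc]; linarith [this]
        have h4 : ∑ _w ∈ SW \ T ℓ, (g (T (ℓ+1)) - g (T ℓ))
            = ((SW \ T ℓ).card : ℝ) * (g (T (ℓ+1)) - g (T ℓ)) := by
          rw [Finset.sum_const, nsmul_eq_mul]
        have hcard : ((SW \ T ℓ).card : ℝ) ≤ (k:ℝ) := by
          have : (SW \ T ℓ).card ≤ SW.card := Finset.card_le_card (sdiff_subset)
          exact_mod_cast le_trans this hSWcard
        have h5 : ((SW \ T ℓ).card : ℝ) * (g (T (ℓ+1)) - g (T ℓ))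
            ≤ (k:ℝ) * (g (T (ℓ+1)) - g (T ℓ)) :=
          mul_le_mul_of_nonneg_right hcard hmarg0
        linarith
      have step : B - g (T (ℓ+1)) ≤ (1 - 1/(k:ℝ)) * (B - g (T ℓ)) := by
        have : (B - g (T ℓ)) / k ≤ g (T (ℓ+1)) - g (T ℓ) := by
          rw [div_le_iff₀ hkR]; linarith [key]
        have h4 : (1 - 1/(k:ℝ)) * (B - g (T ℓ)) = (B - g (T ℓ)) - (B - g (T ℓ))/k := by
          field_simp
        rw [h4]; linarith [this]
      calc B - g (T (ℓ+1)) ≤ (1 - 1/(k:ℝ)) * (B - g (T ℓ)) := step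
        _ ≤ (1 - 1/(k:ℝ)) * ((1 - 1/(k:ℝ))^ℓ * B) := by
            apply mul_le_mul_of_nonneg_left ihh h1k
        _ = (1 - 1/(k:ℝ))^(ℓ+1) * B := by ring
  have hfin := main k le_rfl
  have hpow : (1 - 1/(k:ℝ))^k ≤ 1 / Real.exp 1 := by
    have h1 : 1 - 1/(k:ℝ) ≤ Real.exp (-(1/k)) := by
      linarith [Real.add_one_le_exp (-(1/(k:ℝ)))]
    have h2 : (1 - 1/(k:ℝ))^k ≤ (Real.exp (-(1/k)))^k :=
      pow_le_pow_left₀ h1k h1 k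
    have h3 : (Real.exp (-(1/(k:ℝ))))^k = Real.exp ((k:ℝ) * (-(1/k))) :=
      (Real.exp_nat_mul _ k).symm
    have h4 : (k:ℝ) * (-(1/k)) = -1 := by field_simp
    rw [h3, h4] at h2
    rw [Real.exp_neg] at h2
    simpa [one_div] using h2
  have hmul : (1 - 1/(k:ℝ))^k * B ≤ (1 / Real.exp 1) * B :=
    mul_le_mul_of_nonneg_right hpow hB0
  nlinarith [hfin, hmul]

lemma compl_inter_prob {Ω : Type*} [MeasurableSpace Ω] (μ : Measure Ω) [IsProbabilityMeasure μ]
    {s : ℕ} (A : Fin s → Set Ω) (hA : ∀ i, MeasurableSet (A i)) (hind : iIndepSet A μ) :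
    (μ (⋂ i, (A i)ᶜ)).toReal = ∏ i, (1 - (μ (A i)).toReal) := by
  have hIndep : iIndep (fun i => MeasurableSpace.generateFrom {A i}) μ :=
    (iIndepSet_iff_iIndep _ _).1 hind
  have hmeasGen : ∀ i, MeasurableSet[MeasurableSpace.generateFrom {A i}] (A i)ᶜ := fun i =>
    (MeasurableSpace.measurableSet_generateFrom (Set.mem_singleton _)).compl
  have hprod : μ (⋂ i, (A i)ᶜ) = ∏ i, μ ((A i)ᶜ) := hIndep.meas_iInter hmeasGen
  rw [hprod, ENNReal.toReal_prod]
  congr 1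
  ext i
  rw [prob_compl_eq_one_sub (hA i)]
  rw [ENNReal.toReal_sub_of_le prob_le_one ENNReal.one_ne_top]
  simp

/-- Combining the sampling lemma with the greedy guarantee:
if Ṽ_s is the union of s ≥ (k/(cε₂))log(k/ε₁) i.i.d. random subsets, each
including every v with probability at least c·g({v}) (g monotone submodular,
g(∅)=0, values in [0,1]), then the greedy algorithm run for k steps on Ṽ_s
returns S_greedy with E[g(S_greedy)] ≥ (1 − 1/e)·[(1 − ε₁)·OPT − ε₂]. -/
theorem stmt_18 {V : Type*} [Fintype V] [DecidableEq V]
    {Ω : Type*} [MeasurableSpace Ω] (μ : Measure Ω) [IsProbabilityMeasure μ]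
    (g : Finset V → ℝ)
    (hg01 : ∀ S, 0 ≤ g S ∧ g S ≤ 1)
    (hmono : ∀ A B : Finset V, A ⊆ B → g A ≤ g B)
    (hsub : ∀ A B : Finset V, A ⊆ B → ∀ v ∉ B,
      g (insert v B) - g B ≤ g (insert v A) - g A)
    (hempty : g ∅ = 0)
    (k : ℕ) (hk : 1 ≤ k)
    (c : ℝ) (hc0 : 0 < c) (hc1 : c ≤ 1)
    (ε₁ ε₂ : ℝ) (hε₁ : ε₁ ∈ Set.Ioc (0:ℝ) 1) (hε₂ : ε₂ ∈ Set.Ioc (0:ℝ) 1)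
    (s : ℕ) (hs : 0 < s)
    (hslb : (s : ℝ) ≥ (k : ℝ) / (c * ε₂) * Real.log ((k : ℝ) / ε₁))
    (Vt : Fin s → Ω → Finset V)
    (hmeas : ∀ i (v : V), MeasurableSet {ω | v ∈ Vt i ω})
    (hindep : ∀ v : V, iIndepSet (fun i : Fin s => {ω | v ∈ Vt i ω}) μ)
    (hprob : ∀ i (v : V), c * g {v} ≤ (μ {ω | v ∈ Vt i ω}).toReal)
    (Vs : Ω → Finset V)
    (hVs : ∀ ω, Vs ω = Finset.univ.biUnion (fun i : Fin s => Vt i ω))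
    -- S_greedy is obtained by running the greedy algorithm for k steps on Ṽ_s
    (Sg : Ω → Finset V)
    (hgreedy : ∀ ω, ∃ T : ℕ → Finset V, T 0 = ∅ ∧ Sg ω = T k ∧
      ∀ ℓ < k, ∃ v ∈ Vs ω, T (ℓ + 1) = insert v (T ℓ) ∧
        ∀ w ∈ Vs ω, g (insert w (T ℓ)) ≤ g (insert v (T ℓ)))
    (hint : Integrable (fun ω => g (Sg ω)) μ) :
    ∫ ω, g (Sg ω) ∂μ ≥
      (1 - 1 / Real.exp 1) *
        ((1 - ε₁) * bestVal g k (Finset.univ : Finset V) - ε₂) := by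
  obtain ⟨hε₁0, hε₁1⟩ := hε₁
  obtain ⟨hε₂0, hε₂1⟩ := hε₂
  have hkR : (0:ℝ) < k := by exact_mod_cast hk
  obtain ⟨OPT, hOPT⟩ : ∃ x : ℝ, bestVal g k (Finset.univ : Finset V) = x := ⟨_, rfl⟩
  rw [hOPT]
  obtain ⟨Sstar, hSmem, hSval⟩ :=
    Finset.exists_mem_eq_sup'
      (⟨∅, by simp⟩ : ((Finset.univ : Finset V).powerset.filter (fun S => S.card ≤ k)).Nonempty) g
  rw [Finset.mem_filter, Finset.mem_powerset] at hSmem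
  obtain ⟨hSsub, hScard⟩ := hSmem
  have hOPTS : OPT = g Sstar := by rw [← hOPT]; exact hSval
  have hOPT0 : 0 ≤ OPT := by
    have := le_bestVal g k Finset.univ ∅ (empty_subset _) (by simp)
    rw [hempty, hOPT] at this; exact this
  have he1 : (0:ℝ) ≤ 1 - 1 / Real.exp 1 := by
    have h := Real.add_one_le_exp (1:ℝ)
    have hpos : (0:ℝ) < Real.exp 1 := Real.exp_pos 1
    rw [sub_nonneg, div_le_one hpos]; linarith
  -- set computations for the event v ∉ Vs
  have hsetVs : ∀ v : V, {ω | v ∉ Vs ω} = ⋂ i, ({ω | v ∈ Vt i ω})ᶜ := by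
    intro v; ext ω; simp [hVs ω, Finset.mem_biUnion]
  have hmeasVs : ∀ v : V, MeasurableSet {ω | v ∉ Vs ω} := by
    intro v; rw [hsetVs v]; exact MeasurableSet.iInter (fun i => (hmeas i v).compl)
  obtain ⟨q, hq⟩ : ∃ q : V → ℝ, q = fun v => (μ {ω | v ∉ Vs ω}).toReal := ⟨_, rfl⟩
  have hq0 : ∀ v, 0 ≤ q v := fun v => by rw [hq]; exact ENNReal.toReal_nonneg
  have hq1 : ∀ v, q v ≤ 1 := by
    intro v
    have h1 : μ {ω | v ∉ Vs ω} ≤ 1 := prob_le_one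
    have := ENNReal.toReal_mono ENNReal.one_ne_top h1
    rw [hq]; simpa using this
  have hqexp : ∀ v : V, q v ≤ Real.exp (-((s:ℝ) * (c * g {v}))) := by
    intro v
    rw [hq]
    simp only
    rw [hsetVs v, compl_inter_prob μ _ (fun i => hmeas i v) (hindep v)]
    calc ∏ i, (1 - (μ {ω | v ∈ Vt i ω}).toReal)
        ≤ ∏ _i : Fin s, Real.exp (-(c * g {v})) := by
          apply Finset.prod_le_prod
          · intro i _
            have h1 : μ {ω | v ∈ Vt i ω} ≤ 1 := prob_le_one
            have := ENNReal.toReal_mono ENNReal.one_ne_top h1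
            simp at this; linarith
          · intro i _
            have := hprob i v
            linarith [Real.add_one_le_exp (-(c * g {v}))]
      _ = Real.exp (-(c * g {v})) ^ s := by
          rw [Finset.prod_const, Finset.card_univ, Fintype.card_fin]
      _ = Real.exp ((s:ℝ) * (-(c * g {v}))) := (Real.exp_nat_mul _ s).symm
      _ = Real.exp (-((s:ℝ) * (c * g {v}))) := by ring_nf
  -- the comparison function
  obtain ⟨F, hF⟩ : ∃ F : Ω → ℝ, F = fun ω =>
    g Sstar - ∑ v ∈ Sstar, Set.indicator {ω' | v ∉ Vs ω'} (fun _ => g {v}) ω := ⟨_, rfl⟩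
  -- pointwise bound
  have hpoint : ∀ ω, (1 - 1 / Real.exp 1) * F ω ≤ g (Sg ω) := by
    intro ω
    obtain ⟨T, hT0, hTk, hstep⟩ := hgreedy ω
    have hgb : (1 - 1 / Real.exp 1) * bestVal g k (Vs ω) ≤ g (Sg ω) := by
      rw [hTk]; exact greedy_bound g hmono hsub hempty k hk (Vs ω) T hT0 hstep
    have hsum : ∑ v ∈ Sstar, Set.indicator {ω' | v ∉ Vs ω'} (fun _ => g {v}) ω
        = ∑ v ∈ Sstar \ Vs ω, g {v} := by
      rw [Finset.sdiff_eq_filter, Finset.sum_filter]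
      apply Finset.sum_congr rfl
      intro v _
      by_cases hv : v ∈ Vs ω <;> simp [Set.indicator, hv]
    have hFb : F ω ≤ bestVal g k (Vs ω) := by
      have h1 : g (Sstar ∩ Vs ω) ≤ bestVal g k (Vs ω) :=
        le_bestVal g k (Vs ω) _ inter_subset_right
          (le_trans (Finset.card_le_card inter_subset_left) hScard)
      have h2 := marg_sum g hsub (Sstar ∩ Vs ω) Sstar
      rw [Finset.union_eq_left.2 inter_subset_left, Finset.sdiff_inter_self_left] at h2
      have h3 : ∑ v ∈ Sstar \ Vs ω, (g (insert v (Sstar ∩ Vs ω)) - g (Sstar ∩ Vs ω))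
          ≤ ∑ v ∈ Sstar \ Vs ω, g {v} := by
        apply Finset.sum_le_sum
        intro v hv
        have hvnot : v ∉ Sstar ∩ Vs ω := by
          intro h; exact (mem_sdiff.1 hv).2 (mem_inter.1 h).2
        have := hsub ∅ (Sstar ∩ Vs ω) (empty_subset _) v hvnot
        simp only [Finset.insert_empty] at this
        rw [hempty] at this
        linarith
      rw [hF]
      simp only
      rw [hsum]
      linarith
    calc (1 - 1 / Real.exp 1) * F ω ≤ (1 - 1 / Real.exp 1) * bestVal g k (Vs ω) :=
          mul_le_mul_of_nonneg_left hFb he1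
      _ ≤ g (Sg ω) := hgb
  -- integrability of F
  have hFint : Integrable F μ := by
    rw [hF]
    apply Integrable.sub (integrable_const _)
    apply integrable_finset_sum
    intro v _
    exact (integrable_const _).indicator (hmeasVs v)
  -- integral comparison
  have hIab : ∫ ω, (1 - 1 / Real.exp 1) * F ω ∂μ ≤ ∫ ω, g (Sg ω) ∂μ :=
    integral_mono (hFint.const_mul _) hint hpoint
  have hIF : ∫ ω, (1 - 1 / Real.exp 1) * F ω ∂μ
      = (1 - 1 / Real.exp 1) * (g Sstar - ∑ v ∈ Sstar, q v * g {v}) := by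
    rw [integral_const_mul]
    congr 1
    rw [hF]
    simp only
    rw [integral_sub (integrable_const _)
      (integrable_finset_sum _ (fun v _ => (integrable_const _).indicator (hmeasVs v)))]
    rw [integral_const]
    simp only [probReal_univ, measure_univ, ENNReal.toReal_one, one_smul]
    congr 1
    rw [integral_finset_sum _ (fun v _ => (integrable_const _).indicator (hmeasVs v))]
    apply Finset.sum_congr rfl
    intro v _
    rw [integral_indicator_const _ (hmeasVs v)]
    rw [smul_eq_mul, hq]; rfl
  -- the per-element bound
  have hterm : ∀ v ∈ Sstar, q v * g {v} ≤ ε₂ / k + ε₁ / k * OPT := by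
    intro v _
    have hgv0 : 0 ≤ g {v} := (hg01 {v}).1
    have hgvOPT : g {v} ≤ OPT := by
      rw [← hOPT]
      exact le_bestVal g k Finset.univ {v} (subset_univ _) (by simpa using hk)
    have hnn1 : 0 ≤ ε₁ / k * OPT := by positivity
    have hnn2 : 0 ≤ ε₂ / k := by positivity
    by_cases hsmall : g {v} ≤ ε₂ / k
    · have : q v * g {v} ≤ g {v} := by
        nlinarith [hq1 v, hq0 v]
      linarith
    · push_neg at hsmall
      have hL : (s:ℝ) * (c * (ε₂ / k)) ≥ Real.log ((k:ℝ) / ε₁) := by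
        have hpos : (0:ℝ) < c * ε₂ / k := by positivity
        have h := mul_le_mul_of_nonneg_right hslb (le_of_lt hpos)
        have heq : (k:ℝ) / (c * ε₂) * Real.log ((k:ℝ) / ε₁) * (c * ε₂ / k)
            = Real.log ((k:ℝ) / ε₁) := by
          field_simp
        rw [heq] at h
        calc Real.log ((k:ℝ) / ε₁) ≤ (s:ℝ) * (c * ε₂ / k) := h
          _ = (s:ℝ) * (c * (ε₂ / k)) := by ring
      have hexp : Real.exp (-((s:ℝ) * (c * g {v}))) ≤ ε₁ / k := by
        have h1 : (s:ℝ) * (c * (ε₂/k)) ≤ (s:ℝ) * (c * g {v}) := by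
          have hs0 : (0:ℝ) ≤ s := Nat.cast_nonneg s
          exact mul_le_mul_of_nonneg_left
            (mul_le_mul_of_nonneg_left hsmall.le hc0.le) hs0
        have h2 : Real.exp (-((s:ℝ) * (c * g {v}))) ≤ Real.exp (-Real.log ((k:ℝ)/ε₁)) := by
          apply Real.exp_le_exp.2
          linarith [hL, h1]
        have h3 : Real.exp (-Real.log ((k:ℝ)/ε₁)) = ε₁ / k := by
          rw [Real.exp_neg, Real.exp_log (by positivity : (0:ℝ) < (k:ℝ)/ε₁)]
          rw [inv_div]
        rw [h3] at h2
        exact h2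
      have hqsmall : q v ≤ ε₁ / k := le_trans (hqexp v) hexp
      have : q v * g {v} ≤ (ε₁ / k) * OPT := by
        nlinarith [hq0 v, hgv0, hgvOPT, hqsmall, hOPT0]
      linarith
  have hsumbd : ∑ v ∈ Sstar, q v * g {v} ≤ ε₂ + ε₁ * OPT := by
    have h1 : ∑ v ∈ Sstar, q v * g {v} ≤ Sstar.card • (ε₂ / k + ε₁ / k * OPT) :=
      Finset.sum_le_card_nsmul _ _ _ hterm
    rw [nsmul_eq_mul] at h1
    have h2 : (Sstar.card : ℝ) * (ε₂ / k + ε₁ / k * OPT) ≤ (k:ℝ) * (ε₂ / k + ε₁ / k * OPT) := by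
      apply mul_le_mul_of_nonneg_right _ (by positivity)
      exact_mod_cast hScard
    have h3 : (k:ℝ) * (ε₂ / k + ε₁ / k * OPT) = ε₂ + ε₁ * OPT := by
      field_simp
    linarith
  have hfinal : (1 - ε₁) * OPT - ε₂ ≤ g Sstar - ∑ v ∈ Sstar, q v * g {v} := by
    rw [← hOPTS]; nlinarith [hsumbd]
  calc (1 - 1 / Real.exp 1) * ((1 - ε₁) * OPT - ε₂)
      ≤ (1 - 1 / Real.exp 1) * (g Sstar - ∑ v ∈ Sstar, q v * g {v}) :=
        mul_le_mul_of_nonneg_left hfinal he1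
    _ = ∫ ω, (1 - 1 / Real.exp 1) * F ω ∂μ := hIF.symm
    _ ≤ ∫ ω, g (Sg ω) ∂μ := hIab
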